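/- Let Λ be a finite nonempty set, a > 0, β > 0, c₀, c₁ ∈ ℝ, and λ : Λ → ℝ. Let H : ℝ^Λ → ℝ be measurable of the form H(φ) = a∑_{x∈Λ} φ_x² + H'(φ), where H'(φ) ≥ c₀ for all φ and H'(φ) ≤ c₁ whenever max_{x∈Λ} |φ_x| ≤ 1. Then Z = ∫ exp(−β[H(φ) − ∑_{x∈Λ} λ(x)φ_x]) dφ is finite and strictly positive, and there exists a constant c (depending only on a, β, c₀, c₁, λ and |Λ|) such that the probability density G(φ) = Z^{−1} exp(−β[H(φ) − ∑_{x∈Λ} λ(x)φ_x]) satisfies G(φ) ≤ c·exp(−(βa/2)‖φ‖₂²) for all φ ∈ ℝ^Λ. -/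

import Mathlib

open MeasureTheory

private lemma gauss_pi_integrable (Λ : Type*) [Fintype Λ] {b : ℝ} (hb : 0 < b) :
    Integrable (fun φ : Λ → ℝ => Real.exp (-b * ∑ x, (φ x) ^ 2)) := by
  have : (fun φ : Λ → ℝ => Real.exp (-b * ∑ x, (φ x) ^ 2)) =
      fun φ : Λ → ℝ => ∏ x, Real.exp (-b * (φ x) ^ 2) := by
    ext φ
    rw [← Real.exp_sum]
    congr 1
    rw [Finset.mul_sum]
  rw [this]
  exact Integrable.fintype_prod (f := fun (_ : Λ) (t : ℝ) => Real.exp (-b * t ^ 2))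
    (fun _ => by simpa [sq] using integrable_exp_neg_mul_sq hb)

theorem gibbs_density_superstable_bound
    (Λ : Type*) [Fintype Λ] [Nonempty Λ]
    (a β c₀ c₁ : ℝ) (ha : 0 < a) (hβ : 0 < β) (lam : Λ → ℝ)
    (H H' : (Λ → ℝ) → ℝ) (hH : Measurable H)
    (hform : ∀ φ : Λ → ℝ, H φ = a * (∑ x, (φ x) ^ 2) + H' φ)
    (hlow : ∀ φ : Λ → ℝ, c₀ ≤ H' φ)
    (hup : ∀ φ : Λ → ℝ, (∀ x, |φ x| ≤ 1) → H' φ ≤ c₁) :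
    Integrable (fun φ : Λ → ℝ => Real.exp (-β * (H φ - ∑ x, lam x * φ x))) ∧
    0 < (∫ φ : Λ → ℝ, Real.exp (-β * (H φ - ∑ x, lam x * φ x))) ∧
    ∃ c : ℝ, 0 < c ∧ ∀ φ : Λ → ℝ,
      (∫ ψ : Λ → ℝ, Real.exp (-β * (H ψ - ∑ x, lam x * ψ x)))⁻¹ *
          Real.exp (-β * (H φ - ∑ x, lam x * φ x)) ≤
        c * Real.exp (-(β * a / 2) * ∑ x, (φ x) ^ 2) := by
  set C : ℝ := Real.exp (β * ((1 / (2 * a)) * ∑ x, (lam x) ^ 2 - c₀)) with hC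
  have hCpos : 0 < C := Real.exp_pos _
  -- pointwise bound on the integrand
  have key : ∀ φ : Λ → ℝ,
      Real.exp (-β * (H φ - ∑ x, lam x * φ x)) ≤
      C * Real.exp (-(β * a / 2) * ∑ x, (φ x) ^ 2) := by
    intro φ
    rw [hC, ← Real.exp_add]
    apply Real.exp_le_exp.mpr
    rw [hform φ]
    have hsum : ∑ x, lam x * φ x ≤ (a / 2) * ∑ x, (φ x) ^ 2
        + (1 / (2 * a)) * ∑ x, (lam x) ^ 2 := by
      rw [Finset.mul_sum, Finset.mul_sum, ← Finset.sum_add_distrib]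
      apply Finset.sum_le_sum
      intro x _
      have h2a : (0:ℝ) < 2 * a := by linarith
      have hdiv : 1 / (2 * a) * (lam x) ^ 2 * (2 * a) = (lam x) ^ 2 := by
        field_simp
      nlinarith [sq_nonneg (a * φ x - lam x), sq_nonneg (φ x), sq_nonneg (lam x)]
    have hl := hlow φ
    nlinarith [hβ, hsum]
  have hmeas : Measurable (fun φ : Λ → ℝ =>
      Real.exp (-β * (H φ - ∑ x, lam x * φ x))) := by
    have hsum_meas : Measurable fun φ : Λ → ℝ => ∑ x, lam x * φ x :=
      Finset.measurable_sum Finset.univ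
        (fun x _ => by fun_prop)
    exact Real.measurable_exp.comp ((hH.sub hsum_meas).const_mul (-β))
  have hgauss := gauss_pi_integrable Λ (b := β * a / 2) (by positivity)
  have hint : Integrable (fun φ : Λ → ℝ =>
      Real.exp (-β * (H φ - ∑ x, lam x * φ x))) := by
    apply Integrable.mono (hgauss.const_mul C) hmeas.aestronglyMeasurable
    filter_upwards with φ
    rw [Real.norm_eq_abs, Real.norm_eq_abs, abs_of_nonneg (Real.exp_nonneg _),
      abs_of_nonneg (by positivity)]
    exact key φ
  have hZpos : 0 < ∫ φ : Λ → ℝ, Real.exp (-β * (H φ - ∑ x, lam x * φ x)) := by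
    rw [integral_pos_iff_support_of_nonneg (fun φ => Real.exp_nonneg _) hint]
    have : Function.support (fun φ : Λ → ℝ =>
        Real.exp (-β * (H φ - ∑ x, lam x * φ x))) = Set.univ := by
      ext φ; simp [Function.support, Real.exp_ne_zero]
    rw [this]
    exact Measure.measure_univ_pos.mpr (NeZero.ne _)
  refine ⟨hint, hZpos, ⟨(∫ φ : Λ → ℝ,
      Real.exp (-β * (H φ - ∑ x, lam x * φ x)))⁻¹ * C,
    by positivity, fun φ => ?_⟩⟩
  rw [mul_assoc]
  exact mul_le_mul_of_nonneg_left (key φ) (by positivity)
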